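/- Let d ≥ 1, let F be a d×d real positive definite matrix, let ε be a random vector with distribution N(0, I_d), and let ℓ > 0. Then 2 · E[Φ(−(ℓ/(2√d))·‖ε‖_F)] ≥ 2 · Φ(−(ℓ/2)·√((1/d) Σ_{i=1}^d F_{ii})). (Lower bound on the expected acceptance probability via Jensen's inequality, using that E[‖ε‖²_F] = Σ_{i=1}^d F_{ii}.) -/

import Mathlib

open MeasureTheory ProbabilityTheory Real Matrix Filter

/-- CDF of the standard normal distribution. -/
noncomputable def stdNormalCDF (x : ℝ) : ℝ :=
  ((gaussianReal 0 1) (Set.Iic x)).toReal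

/-- Quadratic form `vᵀ A v`. -/
noncomputable def quadForm {d : ℕ} (A : Matrix (Fin d) (Fin d) ℝ) (v : Fin d → ℝ) : ℝ :=
  v ⬝ᵥ (A *ᵥ v)

/-- Density of the `d`-dimensional Gaussian with mean `μ` and covariance `S`. -/
noncomputable def mvGaussianPdf {d : ℕ} (μ : Fin d → ℝ) (S : Matrix (Fin d) (Fin d) ℝ)
    (x : Fin d → ℝ) : ℝ :=
  (2 * Real.pi) ^ (-(d : ℝ) / 2) * S.det ^ (-(1 : ℝ) / 2) *
    Real.exp (-((x - μ) ⬝ᵥ (S⁻¹ *ᵥ (x - μ))) / 2)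

/-- The `d`-dimensional Gaussian distribution `N(μ, S)`. -/
noncomputable def mvGaussian {d : ℕ} (μ : Fin d → ℝ) (S : Matrix (Fin d) (Fin d) ℝ) :
    Measure (Fin d → ℝ) :=
  volume.withDensity (fun x => ENNReal.ofReal (mvGaussianPdf μ S x))


open scoped ENNReal NNReal

lemma stdNormalCDF_nonneg (x : ℝ) : 0 ≤ stdNormalCDF x := ENNReal.toReal_nonneg

lemma stdNormalCDF_le_one (x : ℝ) : stdNormalCDF x ≤ 1 := by
  unfold stdNormalCDF
  rw [show (1:ℝ) = (1:ℝ≥0∞).toReal by simp]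
  exact ENNReal.toReal_mono ENNReal.one_ne_top prob_le_one

lemma stdNormalCDF_mono : Monotone stdNormalCDF := by
  intro x y hxy
  exact ENNReal.toReal_mono (measure_ne_top _ _) (measure_mono (Set.Iic_subset_Iic.2 hxy))

lemma stdNormalCDF_sub (x y : ℝ) (hxy : x ≤ y) :
    stdNormalCDF y - stdNormalCDF x = ∫ t in x..y, gaussianPDFReal 0 1 t := by
  have hint : Integrable (gaussianPDFReal 0 1) := integrable_gaussianPDFReal 0 1
  have h : ∀ z : ℝ, stdNormalCDF z = ∫ t in Set.Iic z, gaussianPDFReal 0 1 t := by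
    intro z
    unfold stdNormalCDF
    rw [gaussianReal_apply_eq_integral 0 one_ne_zero (Set.Iic z), ENNReal.toReal_ofReal]
    exact setIntegral_nonneg measurableSet_Iic fun t _ => gaussianPDFReal_nonneg 0 1 t
  rw [h, h, intervalIntegral.integral_Iic_sub_Iic hint.integrableOn hint.integrableOn]

lemma gaussianPDFReal_monoOn : MonotoneOn (gaussianPDFReal 0 1) (Set.Iic 0) := by
  intro u hu v hv huv
  simp only [gaussianPDFReal, sub_zero, NNReal.coe_one, mul_one]
  refine mul_le_mul_of_nonneg_left (Real.exp_le_exp.2 ?_) (by positivity)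
  have h1 : u ≤ 0 := hu
  have h2 : v ≤ 0 := hv
  nlinarith

lemma gaussianPDFReal_even (x : ℝ) : gaussianPDFReal 0 1 (-x) = gaussianPDFReal 0 1 x := by
  simp [gaussianPDFReal, neg_sq]

lemma integrable_exp_sq : Integrable (fun t : ℝ => Real.exp (-t^2/2)) := by
  have := integrable_exp_neg_mul_sq (by norm_num : (0:ℝ) < 1/2)
  convert this using 2 with t
  ring_nf

lemma integrable_mul_exp_sq : Integrable (fun t : ℝ => t * Real.exp (-t^2/2)) := by
  have := integrable_mul_exp_neg_mul_sq (by norm_num : (0:ℝ) < 1/2)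
  convert this using 2 with t
  ring_nf

lemma integrable_sq_mul_exp_sq : Integrable (fun t : ℝ => t^2 * Real.exp (-t^2/2)) := by
  have hg : Integrable (fun t : ℝ => 4 * Real.exp (-(1/4) * t^2)) :=
    (integrable_exp_neg_mul_sq (by norm_num : (0:ℝ) < 1/4)).const_mul 4
  refine hg.mono' ?_ (Filter.Eventually.of_forall fun t => ?_)
  · apply Measurable.aestronglyMeasurable; fun_prop
  · have h1 : t^2/4 + 1 ≤ Real.exp (t^2/4) := by
      have := Real.add_one_le_exp (t^2/4)
      linarith
    have h2 : t^2 ≤ 4 * Real.exp (t^2/4) := by nlinarith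
    have h3 : (0:ℝ) < Real.exp (-t^2/2) := Real.exp_pos _
    rw [Real.norm_eq_abs, abs_of_nonneg (by positivity)]
    calc t^2 * Real.exp (-t^2/2) ≤ 4 * Real.exp (t^2/4) * Real.exp (-t^2/2) := by
          exact mul_le_mul_of_nonneg_right h2 h3.le
      _ = 4 * Real.exp (-(1/4) * t^2) := by
          rw [mul_assoc, ← Real.exp_add]; ring_nf

lemma integral_exp_sq : ∫ t : ℝ, Real.exp (-t^2/2) = Real.sqrt (2*Real.pi) := by
  have h := integral_gaussian (1/2 : ℝ)
  have e : (fun t : ℝ => Real.exp (-t^2/2)) = fun t : ℝ => Real.exp (-(1/2) * t^2) := by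
    ext t; ring_nf
  rw [e, h]
  rw [show Real.pi/(1/2:ℝ) = 2*Real.pi by ring]

lemma tendsto_sq_cocompact : Tendsto (fun t : ℝ => t^2) (Filter.cocompact ℝ) atTop := by
  have h1 : Tendsto (fun t : ℝ => ‖t‖) (Filter.cocompact ℝ) atTop :=
    tendsto_norm_cocompact_atTop
  have h2 : Tendsto (fun x : ℝ => x^2) atTop atTop := tendsto_pow_atTop (by norm_num)
  have := h2.comp h1
  refine this.congr fun t => ?_
  simp [Real.norm_eq_abs, sq_abs]

lemma tendsto_exp_sq_cocompact :
    Tendsto (fun t : ℝ => Real.exp (-t^2/2)) (Filter.cocompact ℝ) (nhds 0) := by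
  have h1 : Tendsto (fun t : ℝ => -t^2/2) (Filter.cocompact ℝ) atBot := by
    apply Tendsto.atBot_div_const (by norm_num : (0:ℝ) < 2)
    exact tendsto_neg_atBot_iff.2 tendsto_sq_cocompact
  exact Real.tendsto_exp_atBot.comp h1

lemma tendsto_neg_mul_exp_sq_cocompact :
    Tendsto (fun t : ℝ => -t * Real.exp (-t^2/2)) (Filter.cocompact ℝ) (nhds 0) := by
  have h := tendsto_rpow_abs_mul_exp_neg_mul_sq_cocompact (by norm_num : (0:ℝ) < 1/2) 1
  have h2 : Tendsto (fun t : ℝ => |t| * Real.exp (-t^2/2)) (Filter.cocompact ℝ) (nhds 0) := by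
    refine h.congr fun t => ?_
    rw [Real.rpow_one]
    ring_nf
  have h3 : ∀ t : ℝ, ‖-t * Real.exp (-t^2/2)‖ ≤ |t| * Real.exp (-t^2/2) := fun t => by
    rw [Real.norm_eq_abs, abs_mul, abs_neg, abs_of_nonneg (Real.exp_pos _).le]
  exact squeeze_zero_norm h3 h2

lemma hasDerivAt_neg_mul_exp (t : ℝ) :
    HasDerivAt (fun t : ℝ => -t * Real.exp (-t^2/2))
      (t^2 * Real.exp (-t^2/2) - Real.exp (-t^2/2)) t := by
  have h1 : HasDerivAt (fun t : ℝ => -t^2/2) (-t) t := by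
    have := ((hasDerivAt_pow 2 t).neg).div_const 2
    refine this.congr_deriv ?_
    simp; ring
  have h2 : HasDerivAt (fun t : ℝ => Real.exp (-t^2/2)) (Real.exp (-t^2/2) * (-t)) t :=
    (Real.hasDerivAt_exp _).comp t h1
  have h3 := ((hasDerivAt_id t).neg).mul h2
  refine h3.congr_deriv ?_
  simp
  ring

lemma integral_sq_mul_exp_sq : ∫ t : ℝ, t^2 * Real.exp (-t^2/2) = Real.sqrt (2*Real.pi) := by
  have key := integral_of_hasDerivAt_of_tendsto hasDerivAt_neg_mul_exp
    (integrable_sq_mul_exp_sq.sub integrable_exp_sq)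
    (tendsto_neg_mul_exp_sq_cocompact.mono_left _root_.atBot_le_cocompact)
    (tendsto_neg_mul_exp_sq_cocompact.mono_left _root_.atTop_le_cocompact)
  rw [integral_sub integrable_sq_mul_exp_sq integrable_exp_sq, integral_exp_sq] at key
  linarith [key]

lemma integral_mul_exp_sq : ∫ t : ℝ, t * Real.exp (-t^2/2) = 0 := by
  have hd : ∀ t : ℝ, HasDerivAt (fun t : ℝ => -Real.exp (-t^2/2)) (t * Real.exp (-t^2/2)) t := by
    intro t
    have h1 : HasDerivAt (fun t : ℝ => -t^2/2) (-t) t := by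
      have := ((hasDerivAt_pow 2 t).neg).div_const 2
      refine this.congr_deriv ?_
      simp; ring
    have h2 := ((Real.hasDerivAt_exp _).comp t h1).neg
    refine h2.congr_deriv ?_
    ring
  have key := integral_of_hasDerivAt_of_tendsto hd integrable_mul_exp_sq
    ((tendsto_exp_sq_cocompact.mono_left _root_.atBot_le_cocompact).neg)
    ((tendsto_exp_sq_cocompact.mono_left _root_.atTop_le_cocompact).neg)
  simpa using key

lemma key_ab (a b : ℝ) (ha : 0 < a) (hb : 0 ≤ b) :
    stdNormalCDF (-a) - stdNormalCDF (-b)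
      ≤ gaussianPDFReal 0 1 a * (b^2 - a^2) / (2*a) := by
  have hint : Integrable (gaussianPDFReal 0 1) := integrable_gaussianPDFReal 0 1
  have hφa : 0 ≤ gaussianPDFReal 0 1 a := gaussianPDFReal_nonneg 0 1 a
  rcases le_total a b with hab | hab
  · have h1 : stdNormalCDF (-a) - stdNormalCDF (-b)
        = ∫ t in (-b)..(-a), gaussianPDFReal 0 1 t :=
      stdNormalCDF_sub _ _ (by linarith)
    have h2 : (∫ t in (-b)..(-a), gaussianPDFReal 0 1 t)
        ≤ ∫ t in (-b)..(-a), gaussianPDFReal 0 1 a := by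
      apply intervalIntegral.integral_mono_on (by linarith)
        hint.intervalIntegrable (intervalIntegrable_const)
      intro t ht
      have ht2 : t ≤ -a := ht.2
      have := gaussianPDFReal_monoOn (Set.mem_Iic.2 (by linarith : t ≤ 0))
        (Set.mem_Iic.2 (by linarith : -a ≤ 0)) ht2
      exact this.trans_eq (gaussianPDFReal_even a)
    have h3 : (∫ t in (-b)..(-a), (gaussianPDFReal 0 1 a : ℝ))
        = (b - a) * gaussianPDFReal 0 1 a := by
      rw [intervalIntegral.integral_const]; ring_nf
    rw [h1]
    refine h2.trans ?_
    rw [h3]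
    rw [div_eq_mul_inv]
    calc (b - a) * gaussianPDFReal 0 1 a
        ≤ ((b^2 - a^2)/(2*a)) * gaussianPDFReal 0 1 a := by
          apply mul_le_mul_of_nonneg_right _ hφa
          rw [le_div_iff₀ (by linarith)]
          nlinarith [sq_nonneg (b - a)]
      _ = gaussianPDFReal 0 1 a * (b^2 - a^2) * (2*a)⁻¹ := by ring
  · have h1 : stdNormalCDF (-b) - stdNormalCDF (-a)
        = ∫ t in (-a)..(-b), gaussianPDFReal 0 1 t :=
      stdNormalCDF_sub _ _ (by linarith)
    have h2 : (∫ t in (-a)..(-b), (gaussianPDFReal 0 1 a : ℝ))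
        ≤ ∫ t in (-a)..(-b), gaussianPDFReal 0 1 t := by
      apply intervalIntegral.integral_mono_on (by linarith)
        (intervalIntegrable_const) hint.intervalIntegrable
      intro t ht
      have ht1 : -a ≤ t := ht.1
      have ht2 : t ≤ -b := ht.2
      have := gaussianPDFReal_monoOn (Set.mem_Iic.2 (by linarith : -a ≤ 0))
        (Set.mem_Iic.2 (by linarith : t ≤ 0)) ht1
      exact (gaussianPDFReal_even a) ▸ this
    have h3 : (∫ t in (-a)..(-b), (gaussianPDFReal 0 1 a : ℝ))
        = (a - b) * gaussianPDFReal 0 1 a := by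
      rw [intervalIntegral.integral_const]; ring_nf
    have h4 : gaussianPDFReal 0 1 a * (a^2 - b^2) / (2*a) ≤ (a - b) * gaussianPDFReal 0 1 a := by
      rw [div_le_iff₀ (by linarith)]
      nlinarith [sq_nonneg (a - b), mul_nonneg hφa (sq_nonneg (a - b))]
    have h5 := h4.trans (h3 ▸ h2)
    rw [← h1] at h5
    have e : gaussianPDFReal 0 1 a * (b^2 - a^2)/(2*a)
        = -(gaussianPDFReal 0 1 a * (a^2 - b^2)/(2*a)) := by ring
    linarith

lemma tangent_bound (c m x : ℝ) (hc : 0 < c) (hm : 0 < m) (hx : 0 ≤ x) :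
    stdNormalCDF (-(c * Real.sqrt m))
      - c / (2 * Real.sqrt m) * gaussianPDFReal 0 1 (c * Real.sqrt m) * (x - m)
      ≤ stdNormalCDF (-(c * Real.sqrt x)) := by
  have hsm : 0 < Real.sqrt m := Real.sqrt_pos.2 hm
  have hsx : 0 ≤ Real.sqrt x := Real.sqrt_nonneg x
  have ha : 0 < c * Real.sqrt m := by positivity
  have hb : 0 ≤ c * Real.sqrt x := by positivity
  have key := key_ab (c * Real.sqrt m) (c * Real.sqrt x) ha hb
  have hb2 : (c * Real.sqrt x)^2 = c^2 * x := by
    rw [mul_pow, Real.sq_sqrt hx]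
  have ha2 : (c * Real.sqrt m)^2 = c^2 * m := by
    rw [mul_pow, Real.sq_sqrt hm.le]
  rw [hb2, ha2] at key
  have e : gaussianPDFReal 0 1 (c * Real.sqrt m) * (c^2 * x - c^2 * m) / (2 * (c * Real.sqrt m))
      = c / (2 * Real.sqrt m) * gaussianPDFReal 0 1 (c * Real.sqrt m) * (x - m) := by
    field_simp
  rw [e] at key
  linarith

noncomputable def phi1 (t : ℝ) : ℝ := (Real.sqrt (2*Real.pi))⁻¹ * Real.exp (-t^2/2)

lemma sqrt2pi_pos : 0 < Real.sqrt (2*Real.pi) := Real.sqrt_pos.2 (by positivity)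

lemma phi1_nonneg (t : ℝ) : 0 ≤ phi1 t := by unfold phi1; positivity

lemma integrable_phi1 : Integrable phi1 := integrable_exp_sq.const_mul _

lemma integral_phi1 : ∫ t : ℝ, phi1 t = 1 := by
  unfold phi1
  rw [integral_const_mul, integral_exp_sq, inv_mul_cancel₀ sqrt2pi_pos.ne']

lemma integrable_id_phi1 : Integrable (fun t : ℝ => t * phi1 t) := by
  have := integrable_mul_exp_sq.const_mul (Real.sqrt (2*Real.pi))⁻¹
  refine this.congr (Filter.Eventually.of_forall fun t => ?_)
  unfold phi1; ring

lemma integral_id_phi1 : ∫ t : ℝ, t * phi1 t = 0 := by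
  have e : (fun t : ℝ => t * phi1 t)
      = fun t : ℝ => (Real.sqrt (2*Real.pi))⁻¹ * (t * Real.exp (-t^2/2)) := by
    ext t; unfold phi1; ring
  rw [e, integral_const_mul, integral_mul_exp_sq, mul_zero]

lemma integrable_sq_phi1 : Integrable (fun t : ℝ => t * t * phi1 t) := by
  have := integrable_sq_mul_exp_sq.const_mul (Real.sqrt (2*Real.pi))⁻¹
  refine this.congr (Filter.Eventually.of_forall fun t => ?_)
  unfold phi1; ring

lemma integral_sq_phi1 : ∫ t : ℝ, t * t * phi1 t = 1 := by
  have e : (fun t : ℝ => t * t * phi1 t)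
      = fun t : ℝ => (Real.sqrt (2*Real.pi))⁻¹ * (t^2 * Real.exp (-t^2/2)) := by
    ext t; unfold phi1; ring
  rw [e, integral_const_mul, integral_sq_mul_exp_sq, inv_mul_cancel₀ sqrt2pi_pos.ne']

lemma mvGaussianPdf_std {d : ℕ} (x : Fin d → ℝ) :
    mvGaussianPdf 0 1 x = ∏ k, phi1 (x k) := by
  unfold mvGaussianPdf phi1
  rw [Matrix.det_one, Real.one_rpow, mul_one, sub_zero, inv_one, Matrix.one_mulVec]
  rw [Finset.prod_mul_distrib, ← Real.exp_sum]
  congr 1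
  · rw [Finset.prod_const, Finset.card_univ, Fintype.card_fin,
      Real.sqrt_eq_rpow, ← Real.rpow_neg (by positivity : (0:ℝ) ≤ 2*Real.pi),
      ← Real.rpow_natCast ((2*Real.pi) ^ (-(1/2):ℝ)) d,
      ← Real.rpow_mul (by positivity : (0:ℝ) ≤ 2*Real.pi)]
    congr 1
    push_cast
    ring
  · unfold dotProduct
    rw [← Finset.sum_div, ← Finset.sum_neg_distrib]
    have e2 : (∑ k : Fin d, -(x k * x k)) = ∑ k : Fin d, -x k ^ 2 :=
      Finset.sum_congr rfl fun k _ => by ring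
    rw [e2]

noncomputable def hfun {d : ℕ} (i j k : Fin d) : ℝ → ℝ :=
  fun t => (if k = i then t else 1) * (if k = j then t else 1) * phi1 t

lemma prod_hfun {d : ℕ} (i j : Fin d) (x : Fin d → ℝ) :
    ∏ k, hfun i j k (x k) = x i * x j * mvGaussianPdf 0 1 x := by
  rw [mvGaussianPdf_std]
  unfold hfun
  rw [Finset.prod_mul_distrib, Finset.prod_mul_distrib]
  congr 2 <;> simp

lemma integrable_hfun {d : ℕ} (i j k : Fin d) : Integrable (hfun i j k) := by
  unfold hfun
  by_cases hki : k = i <;> by_cases hkj : k = j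
  · simp only [if_pos hki, if_pos hkj]; exact integrable_sq_phi1
  · simp only [if_pos hki, if_neg hkj, mul_one]; exact integrable_id_phi1
  · simp only [if_neg hki, if_pos hkj, one_mul]; exact integrable_id_phi1
  · simp only [if_neg hki, if_neg hkj, one_mul, mul_one]; exact integrable_phi1

lemma integral_hfun_eq_one_of_eq {d : ℕ} (i k : Fin d) : ∫ t, hfun i i k t = 1 := by
  unfold hfun
  by_cases hki : k = i
  · simp only [if_pos hki]
    exact integral_sq_phi1
  · simp only [if_neg hki, one_mul]
    exact integral_phi1

lemma integral_hfun_eq_zero {d : ℕ} (i j : Fin d) (hij : i ≠ j) : ∫ t, hfun i j i t = 0 := by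
  unfold hfun
  simp only [if_pos rfl, if_neg hij, mul_one]
  exact integral_id_phi1

lemma integrable_xij {d : ℕ} (i j : Fin d) :
    Integrable (fun x : Fin d → ℝ => x i * x j * mvGaussianPdf 0 1 x) := by
  have := MeasureTheory.Integrable.fintype_prod (f := fun k => hfun i j k)
    (fun k => integrable_hfun i j k)
  exact this.congr (Filter.Eventually.of_forall fun x => prod_hfun i j x)

lemma integral_xij {d : ℕ} (i j : Fin d) :
    ∫ x : Fin d → ℝ, x i * x j * mvGaussianPdf 0 1 x = if i = j then 1 else 0 := by
  have h1 : ∫ x : Fin d → ℝ, x i * x j * mvGaussianPdf 0 1 x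
      = ∫ x : Fin d → ℝ, ∏ k, hfun i j k (x k) := by
    congr 1; ext x; rw [prod_hfun]
  rw [h1, MeasureTheory.integral_fintype_prod_volume_eq_prod]
  by_cases hij : i = j
  · subst hij
    simp only [if_pos rfl]
    exact Finset.prod_eq_one fun k _ => integral_hfun_eq_one_of_eq i k
  · rw [if_neg hij]
    exact Finset.prod_eq_zero (Finset.mem_univ i) (integral_hfun_eq_zero i j hij)

lemma mvGaussianPdf_std_nonneg {d : ℕ} (x : Fin d → ℝ) : 0 ≤ mvGaussianPdf 0 1 x := by
  rw [mvGaussianPdf_std]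
  exact Finset.prod_nonneg fun k _ => phi1_nonneg _

lemma measurable_phi1 : Measurable phi1 := by
  unfold phi1; fun_prop

lemma measurable_mvGaussianPdf_std {d : ℕ} :
    Measurable (mvGaussianPdf (0 : Fin d → ℝ) 1) := by
  have : mvGaussianPdf (0 : Fin d → ℝ) 1 = fun x => ∏ k, phi1 (x k) := by
    ext x; exact mvGaussianPdf_std x
  rw [this]
  exact Finset.measurable_prod _ fun k _ => measurable_phi1.comp (measurable_pi_apply k)

lemma smul_pdf_quadForm_eq {d : ℕ} (F : Matrix (Fin d) (Fin d) ℝ) (x : Fin d → ℝ) :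
    (mvGaussianPdf 0 1 x).toNNReal • quadForm F x
      = ∑ i, ∑ j, F i j * (x i * x j * mvGaussianPdf 0 1 x) := by
  rw [NNReal.smul_def, smul_eq_mul, Real.coe_toNNReal _ (mvGaussianPdf_std_nonneg x)]
  simp only [quadForm, Matrix.mulVec, dotProduct, Finset.mul_sum]
  refine Finset.sum_congr rfl fun i _ => Finset.sum_congr rfl fun j _ => by ring

lemma mvGaussian_coe {d : ℕ} : mvGaussian (0 : Fin d → ℝ) 1
    = volume.withDensity (fun x => ((mvGaussianPdf (0 : Fin d → ℝ) 1 x).toNNReal : ℝ≥0∞)) := rfl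

lemma sum_eq_pdf_quad {d : ℕ} (F : Matrix (Fin d) (Fin d) ℝ) :
    (fun x : Fin d → ℝ => (mvGaussianPdf 0 1 x).toNNReal • quadForm F x)
      = fun x => ∑ i, ∑ j, F i j * (x i * x j * mvGaussianPdf 0 1 x) :=
  funext (smul_pdf_quadForm_eq F)

lemma integrable_quadForm_mvGaussian {d : ℕ} (F : Matrix (Fin d) (Fin d) ℝ) :
    Integrable (quadForm F) (mvGaussian (0 : Fin d → ℝ) 1) := by
  rw [mvGaussian_coe, MeasureTheory.integrable_withDensity_iff_integrable_smul₀
    (measurable_mvGaussianPdf_std.real_toNNReal.aemeasurable), sum_eq_pdf_quad F]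
  exact integrable_finset_sum _ fun i _ =>
    integrable_finset_sum _ fun j _ => (integrable_xij i j).const_mul _

lemma integral_quadForm_mvGaussian {d : ℕ} (F : Matrix (Fin d) (Fin d) ℝ) :
    ∫ x, quadForm F x ∂(mvGaussian (0 : Fin d → ℝ) 1) = ∑ i, F i i := by
  rw [mvGaussian_coe, _root_.integral_withDensity_eq_integral_smul₀
    (measurable_mvGaussianPdf_std.real_toNNReal.aemeasurable), sum_eq_pdf_quad F]
  have h1 : ∀ i : Fin d, ∫ x : Fin d → ℝ, ∑ j, F i j * (x i * x j * mvGaussianPdf 0 1 x)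
      = ∑ j, F i j * (if i = j then 1 else 0) := fun i => by
    rw [integral_finset_sum _ fun j _ => (integrable_xij i j).const_mul _]
    exact Finset.sum_congr rfl fun j _ => by rw [integral_const_mul, integral_xij]
  rw [integral_finset_sum (f := fun i (x : Fin d → ℝ) => ∑ j, F i j * (x i * x j * mvGaussianPdf 0 1 x)) _ fun i _ =>
    integrable_finset_sum _ fun j _ => (integrable_xij i j).const_mul _]
  rw [Finset.sum_congr rfl fun i _ => h1 i]
  simp [mul_ite]

lemma measurable_quadForm {d : ℕ} (F : Matrix (Fin d) (Fin d) ℝ) :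
    Measurable (quadForm F) := by
  unfold quadForm dotProduct Matrix.mulVec
  exact Finset.measurable_sum _ fun i _ =>
    ((measurable_pi_apply i).mul (Finset.measurable_sum _ fun j _ =>
      (measurable_const.mul (measurable_pi_apply j))))


/-- Jensen lower bound on the expected acceptance probability: for `ε ∼ N(0, I_d)` and
positive definite `F`, `2 E[Φ(−(ℓ/(2√d))‖ε‖_F)] ≥ 2 Φ(−(ℓ/2)√((1/d)∑ᵢ Fᵢᵢ))`. -/
theorem acceptance_jensen_lower_bound {d : ℕ} (hd : 1 ≤ d)
    (F : Matrix (Fin d) (Fin d) ℝ) (hF : F.PosDef)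
    {Ω : Type*} [MeasureSpace Ω] [IsProbabilityMeasure (ℙ : Measure Ω)]
    (ε : Ω → (Fin d → ℝ)) (hεm : Measurable ε)
    (hε : Measure.map ε ℙ = mvGaussian 0 1)
    (l : ℝ) (hl : 0 < l) :
    2 * ∫ ω, stdNormalCDF (-(l / (2 * Real.sqrt (d : ℝ))) * Real.sqrt (quadForm F (ε ω))) ∂ℙ
      ≥ 2 * stdNormalCDF (-(l / 2) * Real.sqrt ((1 / (d : ℝ)) * ∑ i, F i i)) := by
  have hd0 : (0:ℝ) < d := by exact_mod_cast hd
  have hsd : 0 < Real.sqrt d := Real.sqrt_pos.2 hd0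
  set c : ℝ := l / (2 * Real.sqrt d) with hc_def
  have hc : 0 < c := by positivity
  set m : ℝ := ∑ i, F i i with hm_def
  have hdiag : ∀ i, 0 < F i i := by
    intro i
    have h := hF.dotProduct_mulVec_pos (x := Pi.single i 1) (by
      intro h
      have := congrFun h i
      simp at this)
    simpa using h
  haveI : Nonempty (Fin d) := ⟨⟨0, hd⟩⟩
  have hm : 0 < m := Finset.sum_pos (fun i _ => hdiag i) Finset.univ_nonempty
  have hQ : ∀ v, 0 ≤ quadForm F v := by
    intro v
    have := hF.posSemidef.dotProduct_mulVec_nonneg v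
    simpa [quadForm] using this
  -- integrability of quadForm ∘ ε
  have hQm : Measurable (quadForm F) := measurable_quadForm F
  have hQε_int : Integrable (fun ω => quadForm F (ε ω)) ℙ := by
    have h1 : Integrable (quadForm F) (Measure.map ε ℙ) := by
      rw [hε]; exact integrable_quadForm_mvGaussian F
    exact (integrable_map_measure hQm.aestronglyMeasurable hεm.aemeasurable).1 h1
  have hQε_eq : ∫ ω, quadForm F (ε ω) ∂ℙ = m := by
    have h2 : ∫ x, quadForm F x ∂(Measure.map ε ℙ) = ∫ ω, quadForm F (ε ω) ∂ℙ :=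
      integral_map hεm.aemeasurable hQm.aestronglyMeasurable
    rw [hε, integral_quadForm_mvGaussian] at h2
    exact h2.symm
  set k : ℝ := c / (2 * Real.sqrt m) * gaussianPDFReal 0 1 (c * Real.sqrt m) with hk_def
  -- measurability & integrability of the CDF composite
  have hmeas : Measurable (fun ω => stdNormalCDF (-c * Real.sqrt (quadForm F (ε ω)))) := by
    apply stdNormalCDF_mono.measurable.comp
    exact (measurable_const.mul ((hQm.comp hεm).sqrt))
  have hint : Integrable (fun ω => stdNormalCDF (-c * Real.sqrt (quadForm F (ε ω)))) ℙ := by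
    refine (integrable_const (1:ℝ)).mono' hmeas.aestronglyMeasurable ?_
    refine Filter.Eventually.of_forall fun ω => ?_
    rw [Real.norm_eq_abs, abs_of_nonneg (stdNormalCDF_nonneg _)]
    exact stdNormalCDF_le_one _
  -- pointwise tangent bound
  have hpt : ∀ ω, stdNormalCDF (-(c * Real.sqrt m)) - k * (quadForm F (ε ω) - m)
      ≤ stdNormalCDF (-c * Real.sqrt (quadForm F (ε ω))) := by
    intro ω
    have := tangent_bound c m (quadForm F (ε ω)) hc hm (hQ _)
    rw [neg_mul]
    exact this
  -- integrate
  have hg0 : Integrable (fun ω => quadForm F (ε ω) - m) ℙ := by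
    exact hQε_int.sub (integrable_const m)
  have hg1 : Integrable (fun ω => k * (quadForm F (ε ω) - m)) ℙ := by
    exact hg0.const_mul k
  have hint2 : Integrable (fun ω => stdNormalCDF (-(c * Real.sqrt m))
      - k * (quadForm F (ε ω) - m)) ℙ := by
    exact (integrable_const _).sub hg1
  have hmono := integral_mono hint2 hint (fun ω => hpt ω)
  have hval : ∫ ω, (stdNormalCDF (-(c * Real.sqrt m)) - k * (quadForm F (ε ω) - m)) ∂ℙ
      = stdNormalCDF (-(c * Real.sqrt m)) := by
    rw [integral_sub (integrable_const _) hg1, integral_const]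
    rw [integral_const_mul, integral_sub hQε_int (integrable_const m), hQε_eq, integral_const]
    simp
  rw [hval] at hmono
  -- identify the RHS constant
  have hrhs : -(l / 2) * Real.sqrt ((1 / (d : ℝ)) * m) = -(c * Real.sqrt m) := by
    rw [Real.sqrt_mul (by positivity) m, one_div, Real.sqrt_inv]
    rw [hc_def]
    field_simp
  rw [hrhs]
  have : (fun ω => stdNormalCDF (-(l / (2 * Real.sqrt (d:ℝ))) * Real.sqrt (quadForm F (ε ω))))
      = fun ω => stdNormalCDF (-c * Real.sqrt (quadForm F (ε ω))) := rfl
  rw [this]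
  linarith
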